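/- Let q ≥ 2 be an integer and let t be a nonzero real number. Then (1/q) · sinh(t·q/(q−1)) / sinh(t/(q−1)) ≤ exp( ((q+1)/(6(q−1))) · t² ). -/

import Mathlib

open Real Finset

private lemma fact_ineq' (b : ℕ) : ∀ a : ℕ,
    6 ^ a * (Nat.factorial (a + b) * Nat.factorial (2 * b + 1)) ≤
      Nat.factorial (2 * (a + b) + 1) * Nat.factorial b := by
  intro a
  induction a with
  | zero => simp [Nat.mul_comm]
  | succ a ih =>
    have h1 : Nat.factorial (a + 1 + b) = (a + b + 1) * Nat.factorial (a + b) := by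
      rw [show a + 1 + b = (a + b) + 1 by omega, Nat.factorial_succ]
    have h2 : Nat.factorial (2 * (a + 1 + b) + 1) =
        (2 * (a + b) + 3) * ((2 * (a + b) + 2) * Nat.factorial (2 * (a + b) + 1)) := by
      rw [show 2 * (a + 1 + b) + 1 = (2 * (a + b) + 2) + 1 by omega, Nat.factorial_succ,
        show 2 * (a + b) + 2 = (2 * (a + b) + 1) + 1 by omega, Nat.factorial_succ]
    calc 6 ^ (a + 1) * (Nat.factorial (a + 1 + b) * Nat.factorial (2 * b + 1))
        = (6 * (a + b + 1)) * (6 ^ a * (Nat.factorial (a + b) * Nat.factorial (2 * b + 1))) := by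
          rw [h1]; ring
      _ ≤ (6 * (a + b + 1)) * (Nat.factorial (2 * (a + b) + 1) * Nat.factorial b) :=
          Nat.mul_le_mul_left _ ih
      _ ≤ ((2 * (a + b) + 3) * (2 * (a + b) + 2)) *
            (Nat.factorial (2 * (a + b) + 1) * Nat.factorial b) := by
          apply Nat.mul_le_mul_right
          nlinarith [Nat.zero_le (a + b)]
      _ = Nat.factorial (2 * (a + 1 + b) + 1) * Nat.factorial b := by
          rw [h2]; ring

private lemma nat_coeff {m k : ℕ} (h : k ≤ m) :
    6 ^ k * (Nat.choose m k * (Nat.factorial k * Nat.factorial (2 * (m - k) + 1))) ≤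
      Nat.factorial (2 * m + 1) := by
  have hb : k + (m - k) = m := by omega
  have key := fact_ineq' (m - k) k
  rw [hb] at key
  have hfac : Nat.choose m k * Nat.factorial k * Nat.factorial (m - k) = Nat.factorial m :=
    Nat.choose_mul_factorial_mul_factorial h
  have hpos : 0 < Nat.factorial (m - k) := Nat.factorial_pos _
  refine Nat.le_of_mul_le_mul_right ?_ hpos
  calc 6 ^ k * (Nat.choose m k * (Nat.factorial k * Nat.factorial (2 * (m - k) + 1))) *
        Nat.factorial (m - k)
      = 6 ^ k * (Nat.factorial m * Nat.factorial (2 * (m - k) + 1)) := by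
        rw [← hfac]; ring
    _ ≤ Nat.factorial (2 * m + 1) * Nat.factorial (m - k) := key

private lemma coeff_le {c : ℝ} (hc : 0 ≤ c) (m : ℕ) :
    (6 * c + 1) ^ m / (Nat.factorial (2 * m + 1) : ℝ) ≤
      ∑ k ∈ range (m + 1), c ^ k / ((Nat.factorial k : ℝ) * (Nat.factorial (2 * (m - k) + 1))) := by
  rw [add_pow, sum_div]
  refine Finset.sum_le_sum fun k hk => ?_
  have hkm : k ≤ m := by simpa using Nat.lt_succ_iff.mp (mem_range.mp hk)
  have h1 : ((6:ℝ) * c) ^ k * 1 ^ (m - k) * (Nat.choose m k) = c ^ k * (6 ^ k * Nat.choose m k) := by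
    rw [mul_pow]; ring
  rw [h1, mul_div_assoc]
  have h2 : (6:ℝ) ^ k * Nat.choose m k / (Nat.factorial (2 * m + 1) : ℝ) ≤
      1 / ((Nat.factorial k : ℝ) * (Nat.factorial (2 * (m - k) + 1))) := by
    rw [div_le_div_iff₀ (by positivity) (by positivity)]
    have := nat_coeff hkm
    have : ((6 ^ k * (Nat.choose m k * (Nat.factorial k * Nat.factorial (2 * (m - k) + 1))) : ℕ) : ℝ)
        ≤ ((Nat.factorial (2 * m + 1) : ℕ) : ℝ) := Nat.cast_le.mpr this
    push_cast at this
    nlinarith [this]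
  calc c ^ k * ((6:ℝ) ^ k * Nat.choose m k / (Nat.factorial (2 * m + 1) : ℝ))
      ≤ c ^ k * (1 / ((Nat.factorial k : ℝ) * (Nat.factorial (2 * (m - k) + 1)))) :=
        mul_le_mul_of_nonneg_left h2 (by positivity)
    _ = c ^ k / ((Nat.factorial k : ℝ) * (Nat.factorial (2 * (m - k) + 1))) := by ring

private lemma sinh_mul_le {Q s : ℝ} (hQ : 1 ≤ Q) (hs : 0 ≤ s) :
    Real.sinh (Q * s) ≤ Q * Real.sinh s * Real.exp ((Q ^ 2 - 1) / 6 * s ^ 2) := by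
  set c : ℝ := (Q ^ 2 - 1) / 6 with hc
  have hc0 : 0 ≤ c := by
    have : 1 ≤ Q ^ 2 := by nlinarith
    rw [hc]; linarith
  have hQ2 : Q ^ 2 = 6 * c + 1 := by rw [hc]; ring
  set f : ℕ → ℝ := fun a => (c * s ^ 2) ^ a / (Nat.factorial a : ℝ) with hf
  set g : ℕ → ℝ := fun b => s ^ (2 * b + 1) / (Nat.factorial (2 * b + 1) : ℝ) with hg
  have hfsum : HasSum f (Real.exp (c * s ^ 2)) := by
    rw [Real.exp_eq_exp_ℝ]
    exact NormedSpace.expSeries_div_hasSum_exp (c * s ^ 2)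
  have hgsum : HasSum g (Real.sinh s) := Real.hasSum_sinh s
  have hfn : Summable fun x => ‖f x‖ :=
    hfsum.summable.congr fun x => (Real.norm_of_nonneg (by positivity)).symm
  have hgn : Summable fun x => ‖g x‖ :=
    hgsum.summable.congr fun x => (Real.norm_of_nonneg (by positivity)).symm
  have key : Real.exp (c * s ^ 2) * Real.sinh s =
      ∑' n, ∑ kl ∈ antidiagonal n, f kl.1 * g kl.2 := by
    rw [← hfsum.tsum_eq, ← hgsum.tsum_eq]
    exact tsum_mul_tsum_eq_tsum_sum_antidiagonal_of_summable_norm hfn hgn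
  have hsum2 : Summable fun n => ∑ kl ∈ antidiagonal n, f kl.1 * g kl.2 :=
    summable_sum_mul_antidiagonal_of_summable_mul
      (summable_mul_of_summable_norm hfn hgn)
  have term : ∀ m : ℕ, (Q * s) ^ (2 * m + 1) / (Nat.factorial (2 * m + 1) : ℝ) ≤
      Q * ∑ kl ∈ antidiagonal m, f kl.1 * g kl.2 := by
    intro m
    have hanti : ∑ kl ∈ antidiagonal m, f kl.1 * g kl.2 =
        ∑ k ∈ range (m + 1), f k * g (m - k) :=
      Finset.Nat.sum_antidiagonal_eq_sum_range_succ_mk _ m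
    have hterm : ∀ k ∈ range (m + 1), f k * g (m - k) =
        s ^ (2 * m + 1) * (c ^ k / ((Nat.factorial k : ℝ) * (Nat.factorial (2 * (m - k) + 1)))) := by
      intro k hk
      have hkm : k ≤ m := Nat.lt_succ_iff.mp (mem_range.mp hk)
      have hexp : 2 * m + 1 = 2 * k + (2 * (m - k) + 1) := by omega
      rw [hf, hg]
      simp only
      rw [mul_pow, ← pow_mul, hexp, pow_add]
      ring
    rw [hanti, Finset.sum_congr rfl hterm, ← Finset.mul_sum]
    have hpow : (Q * s) ^ (2 * m + 1) = Q * (s ^ (2 * m + 1) * ((6 * c + 1)) ^ m) := by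
      rw [mul_pow, pow_succ, pow_mul, hQ2]; ring
    calc (Q * s) ^ (2 * m + 1) / (Nat.factorial (2 * m + 1) : ℝ)
        = Q * (s ^ (2 * m + 1) * ((6 * c + 1) ^ m / (Nat.factorial (2 * m + 1) : ℝ))) := by
          rw [hpow]; ring
      _ ≤ Q * (s ^ (2 * m + 1) *
            ∑ k ∈ range (m + 1), c ^ k / ((Nat.factorial k : ℝ) * (Nat.factorial (2 * (m - k) + 1)))) := by
          have h0Q : (0:ℝ) ≤ Q := le_trans zero_le_one hQ
          have hsp : (0:ℝ) ≤ s ^ (2 * m + 1) := by positivity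
          exact mul_le_mul_of_nonneg_left
            (mul_le_mul_of_nonneg_left (coeff_le hc0 m) hsp) h0Q
  have hsinh : HasSum (fun m => (Q * s) ^ (2 * m + 1) / (Nat.factorial (2 * m + 1) : ℝ))
      (Real.sinh (Q * s)) := Real.hasSum_sinh (Q * s)
  calc Real.sinh (Q * s)
      = ∑' m, (Q * s) ^ (2 * m + 1) / (Nat.factorial (2 * m + 1) : ℝ) := hsinh.tsum_eq.symm
    _ ≤ ∑' n, Q * ∑ kl ∈ antidiagonal n, f kl.1 * g kl.2 :=
        Summable.tsum_le_tsum term hsinh.summable (hsum2.mul_left Q)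
    _ = Q * ∑' n, ∑ kl ∈ antidiagonal n, f kl.1 * g kl.2 := tsum_mul_left
    _ = Q * (Real.exp (c * s ^ 2) * Real.sinh s) := by rw [← key]
    _ = Q * Real.sinh s * Real.exp ((Q ^ 2 - 1) / 6 * s ^ 2) := by rw [← hc]; ring

private lemma mgf_pos (q : ℕ) (hq : 2 ≤ q) (t : ℝ) (ht : 0 < t) :
    1 / (q : ℝ) * Real.sinh (t * q / (q - 1)) / Real.sinh (t / (q - 1)) ≤
      Real.exp ((q + 1) / (6 * (q - 1)) * t ^ 2) := by
  have hQ : (2:ℝ) ≤ (q:ℝ) := by exact_mod_cast hq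
  have hd : (0:ℝ) < (q:ℝ) - 1 := by linarith
  set s : ℝ := t / ((q:ℝ) - 1) with hsdef
  have hs : 0 < s := div_pos ht hd
  have hts : t * q / ((q:ℝ) - 1) = (q:ℝ) * s := by rw [hsdef]; ring
  have hE : ((q:ℝ) ^ 2 - 1) / 6 * s ^ 2 = ((q:ℝ) + 1) / (6 * ((q:ℝ) - 1)) * t ^ 2 := by
    rw [hsdef]
    field_simp
    ring
  have hmain := sinh_mul_le (Q := (q:ℝ)) (s := s) (by linarith) hs.le
  have hsinh : 0 < Real.sinh s := Real.sinh_pos_iff.mpr hs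
  have hq0 : (0:ℝ) < (q:ℝ) := by linarith
  rw [hts, ← hE]
  rw [div_le_iff₀ hsinh, div_mul_eq_mul_div, div_le_iff₀ hq0]
  calc 1 * Real.sinh ((q:ℝ) * s)
      = Real.sinh ((q:ℝ) * s) := one_mul _
    _ ≤ (q:ℝ) * Real.sinh s * Real.exp (((q:ℝ) ^ 2 - 1) / 6 * s ^ 2) := hmain
    _ = Real.exp (((q:ℝ) ^ 2 - 1) / 6 * s ^ 2) * Real.sinh s * (q:ℝ) := by ring

/-- Sub-Gaussian bound for the moment generating function of the normalized
digit variable: `(1/q) sinh(tq/(q-1)) / sinh(t/(q-1)) ≤ exp((q+1)/(6(q-1)) t²)`. -/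
theorem mgf_digit_sum_le (q : ℕ) (hq : 2 ≤ q) (t : ℝ) (ht : t ≠ 0) :
    1 / (q : ℝ) * Real.sinh (t * q / (q - 1)) / Real.sinh (t / (q - 1)) ≤
      Real.exp ((q + 1) / (6 * (q - 1)) * t ^ 2) := by
  rcases ht.lt_or_gt with hlt | hgt
  · have h := mgf_pos q hq (-t) (by linarith)
    have h1 : -t * (q:ℝ) / ((q:ℝ) - 1) = -(t * q / ((q:ℝ) - 1)) := by ring
    have h2 : -t / ((q:ℝ) - 1) = -(t / ((q:ℝ) - 1)) := by ring
    rw [h1, h2, Real.sinh_neg, Real.sinh_neg, neg_pow, mul_neg, neg_div_neg_eq] at h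
    simpa using h
  · exact mgf_pos q hq t hgt
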